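/- For a tournament W on a finite set X with at least 3 elements, the following are equivalent: (1) W is not transitive; (2) for every ranking ≻ on X, there exist distinct W-feasible rankings R and R' such that R is more aligned with ≻ than R'. -/

import Mathlib

variable {X : Type*}

def Tournament (W : X → X → Prop) : Prop :=
  (∀ x y : X, x ≠ y → W x y ∨ W y x) ∧ (∀ x y : X, W x y → ¬ W y x)

def Ranking (R : X → X → Prop) : Prop :=
  (∀ x : X, ¬ R x x) ∧ (∀ x y z : X, R x y → R y z → R x z) ∧
    (∀ x y : X, x ≠ y → R x y ∨ R y x)

def ProtoRanking (R : X → X → Prop) : Prop :=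
  (∀ x : X, ¬ R x x) ∧ (∀ x y z : X, R x y → R y z → R x z)

def Adjacent (R : X → X → Prop) (x y : X) : Prop :=
  R x y ∧ ¬ ∃ z : X, R x z ∧ R z y

def Feasible (W R : X → X → Prop) : Prop :=
  ∀ x y : X, Adjacent R x y → W x y

def Efficient (succ W R : X → X → Prop) : Prop :=
  ∀ x y : X, succ x y → W x y → R x y

def MoreAligned (succ R R' : X → X → Prop) : Prop :=
  ∀ x y : X, succ x y → R' x y → R x y

open List

/-- Split a `W`-chain at the point after the last `W`-predecessor of `v`. -/
lemma tour_exists_split {W : X → X → Prop} (hW : Tournament W) (v : X) :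
    ∀ m : List X, v ∉ m → ∃ p q : List X, m = p ++ q ∧ (∀ u ∈ q, W v u) ∧
      (∀ x ∈ p.getLast?, W x v) := by
  intro m
  induction m using List.reverseRecOn with
  | nil => exact fun _ => ⟨[], [], rfl, by simp, by simp⟩
  | append_singleton m a ih =>
    intro hv
    have hvm : v ∉ m := fun h => hv (mem_append_left _ h)
    have hva : v ≠ a := by intro h; exact hv (by simp [h])
    by_cases hav : W a v
    · refine ⟨m ++ [a], [], by simp, by simp, ?_⟩
      intro x hx
      rw [getLast?_concat] at hx
      simp at hx
      subst hx; exact hav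
    · obtain ⟨p, q, rfl, hq, hp⟩ := ih hvm
      refine ⟨p, q ++ [a], by simp, ?_, hp⟩
      intro u hu
      rcases mem_append.1 hu with h | h
      · exact hq u h
      · simp only [mem_singleton] at h; subst h
        exact (hW.1 v u hva).resolve_right hav

lemma idx_mid [DecidableEq X] {p : List X} (q : List X) {v : X} (hv : v ∉ p) :
    (p ++ v :: q).idxOf v = p.length := by
  rw [idxOf_append_of_notMem hv, idxOf_cons_self]
  omega

lemma idx_left [DecidableEq X] {p : List X} (q : List X) {x : X} (hx : x ∈ p) (v : X) :
    (p ++ v :: q).idxOf x = (p ++ q).idxOf x := by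
  rw [idxOf_append_of_mem hx, idxOf_append_of_mem hx]

lemma idx_right [DecidableEq X] {p q : List X} {x v : X} (hx : x ∉ p) (hxv : v ≠ x) :
    (p ++ v :: q).idxOf x = (p ++ q).idxOf x + 1 := by
  rw [idxOf_append_of_notMem hx, idxOf_append_of_notMem hx, idxOf_cons_ne _ hxv]
  omega

lemma idx_mono [DecidableEq X] {p q : List X} {v x y : X}
    (hxv : v ≠ x) (hyv : v ≠ y)
    (h : (p ++ q).idxOf x < (p ++ q).idxOf y) :
    (p ++ v :: q).idxOf x < (p ++ v :: q).idxOf y := by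
  by_cases hyp : y ∈ p
  · have hyi : (p ++ q).idxOf y < p.length := by
      rw [idxOf_append_of_mem hyp]; exact idxOf_lt_length_iff.2 hyp
    have hxp : x ∈ p := by
      by_contra hxp
      have : p.length ≤ (p ++ q).idxOf x := by
        rw [idxOf_append_of_notMem hxp]; omega
      omega
    rw [idx_left q hxp v, idx_left q hyp v]; exact h
  · rw [idx_right hyp hyv]
    by_cases hxp : x ∈ p
    · rw [idx_left q hxp v]; omega
    · rw [idx_right hxp hxv]; omega

/-- Key construction: inserting elements in increasing preference order into a
Hamiltonian `W`-path, each right after its last `W`-predecessor, yields a feasible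
and efficient ordering. -/
lemma main_ins [DecidableEq X] {W succ : X → X → Prop} (hW : Tournament W)
    (hs : ∀ a b : X, succ a b → ¬ succ b a) :
    ∀ s : List X, s.Nodup → s.Pairwise (fun a b => ¬ succ a b) →
      ∃ m : List X, m.Perm s ∧ m.IsChain W ∧
        ∀ x y : X, x ∈ s → y ∈ s → succ x y → W x y →
          m.idxOf x < m.idxOf y := by
  intro s
  induction s with
  | nil => exact fun _ _ => ⟨[], Perm.nil, by simp, by simp⟩
  | cons v t ih =>
    intro hnd hpw
    obtain ⟨m, hperm, hchain, heff⟩ := ih (nodup_cons.1 hnd).2 (pairwise_cons.1 hpw).2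
    have hvt : v ∉ t := (nodup_cons.1 hnd).1
    have hvm : v ∉ m := fun h => hvt (hperm.subset h)
    obtain ⟨p, q, hm, hq, hp⟩ := tour_exists_split hW v m hvm
    subst hm
    have hvp : v ∉ p := fun h => hvm (mem_append_left _ h)
    refine ⟨p ++ v :: q, perm_middle.trans (hperm.cons v), ?_, ?_⟩
    · refine IsChain.append hchain.left_of_append
        (isChain_cons.2 ⟨fun y hy => hq y (mem_of_mem_head? hy), hchain.right_of_append⟩) ?_
      intro x hx y hy
      simp only [head?_cons, Option.mem_def, Option.some.injEq] at hy
      subst hy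
      exact hp x hx
    · intro x y hx hy hsucc hWxy
      rcases mem_cons.1 hx with rfl | hxt
      · exfalso
        rcases mem_cons.1 hy with rfl | hyt
        · exact hs _ _ hsucc hsucc
        · exact (pairwise_cons.1 hpw).1 y hyt hsucc
      · rcases mem_cons.1 hy with hyv | hyt
        · -- y = v, x ∈ t, W x v : then x ∈ p and v sits at position p.length
          rw [hyv] at hWxy ⊢
          have hxm : x ∈ p ++ q := hperm.mem_iff.2 hxt
          have hxp : x ∈ p := by
            rcases mem_append.1 hxm with h | h
            · exact h
            · exact absurd (hq x h) (hW.2 _ _ hWxy)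
          have h1 : (p ++ v :: q).idxOf x = p.idxOf x := idxOf_append_of_mem hxp
          rw [h1, idx_mid q hvp]
          exact idxOf_lt_length_iff.2 hxp
        · have hxv : v ≠ x := fun h => hvt (h ▸ hxt)
          have hyv : v ≠ y := fun h => hvt (h ▸ hyt)
          exact idx_mono hxv hyv (heff x y hxt hyt hsucc hWxy)

lemma ranking_of_list [DecidableEq X] {W : X → X → Prop} {m : List X}
    (hnd : m.Nodup) (hall : ∀ x : X, x ∈ m) (hchain : m.IsChain W) :
    Ranking (fun x y => m.idxOf x < m.idxOf y) ∧
      Feasible W (fun x y => m.idxOf x < m.idxOf y) := by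
  constructor
  · refine ⟨fun x => lt_irrefl _, fun x y z => Nat.lt_trans, fun x y hne => ?_⟩
    have : m.idxOf x ≠ m.idxOf y :=
      fun h => hne ((idxOf_inj (hall x)).1 h)
    omega
  · rintro x y ⟨hlt, hnex⟩
    have hxl : m.idxOf x < m.length := idxOf_lt_length_iff.2 (hall x)
    have hyl : m.idxOf y < m.length := idxOf_lt_length_iff.2 (hall y)
    have hconsec : m.idxOf y = m.idxOf x + 1 := by
      by_contra hne
      have h1 : m.idxOf x + 1 < m.idxOf y := by omega
      have h2 : m.idxOf x + 1 < m.length := by omega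
      have hz : m.idxOf (m.get ⟨m.idxOf x + 1, h2⟩) = m.idxOf x + 1 := by
        have := get_idxOf hnd ⟨m.idxOf x + 1, h2⟩
        simpa using this
      refine hnex ⟨m.get ⟨m.idxOf x + 1, h2⟩, ?_, ?_⟩
      · show m.idxOf x < m.idxOf (m.get ⟨m.idxOf x + 1, h2⟩)
        omega
      · show m.idxOf (m.get ⟨m.idxOf x + 1, h2⟩) < m.idxOf y
        omega
    have h2 : m.idxOf x + 1 < m.length := by omega
    have hW' := isChain_iff_getElem.1 hchain (m.idxOf x) (by omega)
    have hx : m.get ⟨m.idxOf x, hxl⟩ = x := idxOf_get hxl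
    have hy : m.get ⟨m.idxOf x + 1, h2⟩ = y := by
      refine (idxOf_inj (get_mem _ _)).1 ?_
      have := get_idxOf hnd ⟨m.idxOf x + 1, h2⟩
      simp only [Fin.val_mk] at this
      omega
    show W x y
    rw [← hx, ← hy]
    exact hW'

/-- Existence of a feasible and efficient ranking for any tournament and preference. -/
lemma exists_eff [Fintype X] {W succ : X → X → Prop} (hW : Tournament W)
    (hsucc : Ranking succ) :
    ∃ R : X → X → Prop, Ranking R ∧ Feasible W R ∧ Efficient succ W R := by
  classical
  obtain ⟨hsi, hst, hstot⟩ := hsucc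
  have hs : ∀ a b : X, succ a b → ¬ succ b a :=
    fun a b h h' => hsi a (hst a b a h h')
  set r : X → X → Prop := fun a b => ¬ succ a b with hr
  haveI : DecidableRel r := fun a b => Classical.propDecidable _
  haveI : IsTotal X r := ⟨by
    intro a b
    by_cases h : succ a b
    · exact Or.inr (hs a b h)
    · exact Or.inl h⟩
  haveI : IsTrans X r := ⟨by
    intro a b c hab hbc hac
    rcases eq_or_ne a b with rfl | hne
    · exact hbc hac
    · exact hbc (hst b a c ((hstot a b hne).resolve_left hab) hac)⟩
  set s := insertionSort r Finset.univ.toList with hsdef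
  have hperm : s.Perm Finset.univ.toList := perm_insertionSort r _
  have hnd : s.Nodup := hperm.nodup_iff.2 Finset.univ.nodup_toList
  have hsort : s.Pairwise r := pairwise_insertionSort r _
  obtain ⟨m, hm, hchain, heff⟩ := main_ins hW hs s hnd hsort
  have hmem : ∀ x : X, x ∈ s :=
    fun x => hperm.mem_iff.2 (Finset.mem_toList.2 (Finset.mem_univ x))
  have hall : ∀ x : X, x ∈ m := fun x => hm.mem_iff.2 (hmem x)
  have hndm : m.Nodup := hm.nodup_iff.2 hnd
  obtain ⟨hrk, hfe⟩ := ranking_of_list hndm hall hchain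
  exact ⟨_, hrk, hfe, fun x y h1 h2 => heff x y (hmem x) (hmem y) h1 h2⟩

/-- If `W` is transitive, every feasible ranking is contained in `W`. -/
lemma feasible_sub [Fintype X] {W : X → X → Prop} (hW : Tournament W)
    (htrans : ∀ a b c : X, W a b → W b c → W a c)
    {T : X → X → Prop} (hT : Ranking T) (hf : Feasible W T) :
    ∀ x y : X, T x y → W x y := by
  classical
  obtain ⟨hTi, hTt, _⟩ := hT
  have key : ∀ n : ℕ, ∀ x y : X, T x y →
      (Finset.univ.filter (fun z => T x z ∧ T z y)).card ≤ n → W x y := by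
    intro n
    induction n with
    | zero =>
      intro x y hxy hc
      refine hf x y ⟨hxy, ?_⟩
      rintro ⟨z, hz⟩
      have : z ∈ Finset.univ.filter (fun z => T x z ∧ T z y) :=
        Finset.mem_filter.2 ⟨Finset.mem_univ z, hz⟩
      have := Finset.card_pos.2 ⟨z, this⟩
      omega
    | succ n ih =>
      intro x y hxy hc
      by_cases he : ∃ z, T x z ∧ T z y
      · obtain ⟨z, hz1, hz2⟩ := he
        have hzmem : z ∈ Finset.univ.filter (fun w => T x w ∧ T w y) :=
          Finset.mem_filter.2 ⟨Finset.mem_univ z, hz1, hz2⟩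
        have h1 : W x z := by
          refine ih x z hz1 ?_
          have hss : Finset.univ.filter (fun w => T x w ∧ T w z) ⊂
              Finset.univ.filter (fun w => T x w ∧ T w y) := by
            refine ⟨fun w hw => ?_, fun hsub => ?_⟩
            · have hw' := Finset.mem_filter.1 hw
              exact Finset.mem_filter.2 ⟨Finset.mem_univ w, hw'.2.1,
                hTt w z y hw'.2.2 hz2⟩
            · have := (Finset.mem_filter.1 (hsub hzmem)).2.2
              exact hTi z this
          have := Finset.card_lt_card hss
          omega
        have h2 : W z y := by
          refine ih z y hz2 ?_
          have hss : Finset.univ.filter (fun w => T z w ∧ T w y) ⊂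
              Finset.univ.filter (fun w => T x w ∧ T w y) := by
            refine ⟨fun w hw => ?_, fun hsub => ?_⟩
            · have hw' := Finset.mem_filter.1 hw
              exact Finset.mem_filter.2 ⟨Finset.mem_univ w,
                hTt x z w hz1 hw'.2.1, hw'.2.2⟩
            · have := (Finset.mem_filter.1 (hsub hzmem)).2.1
              exact hTi z this
          have := Finset.card_lt_card hss
          omega
        exact htrans x z y h1 h2
      · exact hf x y ⟨hxy, he⟩
  intro x y hxy
  exact key _ x y hxy le_rfl

/-- The chair benefits from agenda-setting (for some/every preference) iff W is intransitive. -/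
theorem stmt14 [Fintype X] (W : X → X → Prop) (hW : Tournament W)
    (hcard : 3 ≤ Fintype.card X) :
    (¬ ∀ a b c : X, W a b → W b c → W a c) ↔
      ∀ succ : X → X → Prop, Ranking succ →
        ∃ R R' : X → X → Prop, Ranking R ∧ Ranking R' ∧
          Feasible W R ∧ Feasible W R' ∧ R ≠ R' ∧ MoreAligned succ R R' := by
  constructor
  · intro hnt succ hsucc
    push_neg at hnt
    obtain ⟨a, b, c, hab, hbc, hnac⟩ := hnt
    have hne_of : ∀ x y : X, W x y → x ≠ y := by
      rintro x y h rfl; exact hW.2 x x h h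
    have hac : a ≠ c := by
      rintro rfl; exact hW.2 a b hab hbc
    have hca : W c a := (hW.1 a c hac).resolve_left hnac
    obtain ⟨hsi, hst, hstot⟩ := hsucc
    have hsucc' : Ranking (fun x y => succ y x) :=
      ⟨hsi, fun x y z h1 h2 => hst z y x h2 h1,
        fun x y hne => (hstot x y hne).symm⟩
    obtain ⟨R, hR, hfR, heR⟩ := exists_eff hW ⟨hsi, hst, hstot⟩
    obtain ⟨R', hR', hfR', heR'⟩ := exists_eff hW hsucc'
    refine ⟨R, R', hR, hR', hfR, hfR', ?_, ?_⟩
    · intro h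
      subst h
      have h3 : ∀ x y : X, W x y → R x y := by
        intro x y hw
        rcases hstot x y (hne_of x y hw) with h | h
        · exact heR x y h hw
        · exact heR' x y h hw
      exact hR.1 a (hR.2.1 a b a (h3 a b hab) (hR.2.1 b c a (h3 b c hbc) (h3 c a hca)))
    · intro x y hxy hR'xy
      by_cases hw : W x y
      · exact heR x y hxy hw
      · exfalso
        have hne : x ≠ y := by rintro rfl; exact hR'.1 x hR'xy
        have hwyx : W y x := (hW.1 x y hne).resolve_left hw
        have : R' y x := heR' y x hxy hwyx
        exact hR'.1 x (hR'.2.1 x y x hR'xy this)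
  · intro hRHS htrans
    have hWR : Ranking W :=
      ⟨fun x h => hW.2 x x h h, htrans, hW.1⟩
    obtain ⟨R, R', hR, hR', hf, hf', hne, _⟩ := hRHS W hWR
    have heq : ∀ (T : X → X → Prop), Ranking T → Feasible W T → T = W := by
      intro T hT hfT
      funext x y
      apply propext
      constructor
      · exact feasible_sub hW htrans hT hfT x y
      · intro hw
        rcases hT.2.2 x y (by rintro rfl; exact hW.2 x x hw hw) with h | h
        · exact h
        · exact absurd (feasible_sub hW htrans hT hfT y x h) (hW.2 x y hw)
    exact hne ((heq R hR hf).trans (heq R' hR' hf').symm)
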